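/- For all integers n ≥ 2 and i ≥ 1, the Jacobsthal–Lucas numbers satisfy j_{ni+i} = j_i^{n−1} · j_{2i} − (−2)^i · Σ_{k=1}^{n−1} j_i^{n−1−k} · j_{ik}. -/

import Mathlib

/-- Jacobsthal–Lucas: j_{ni+i} = j_i^{n−1} · j_{2i} − (−2)^i · Σ_{k=1}^{n−1} j_i^{n−1−k} · j_{ik}. -/
theorem jacobsthalLucas_sum (jl : ℕ → ℤ)
    (hj0 : jl 0 = 2) (hj1 : jl 1 = 1)
    (hj : ∀ n : ℕ, jl (n + 2) = jl (n + 1) + 2 * jl n)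
    (n i : ℕ) (hn : 2 ≤ n) (hi : 1 ≤ i) :
    jl (n * i + i) = jl i ^ (n - 1) * jl (2 * i) -
      (-2 : ℤ) ^ i * ∑ k ∈ Finset.Icc 1 (n - 1), jl i ^ (n - 1 - k) * jl (i * k) := by
  have closed : ∀ m, jl m = 2 ^ m + (-1) ^ m := by
    intro m
    induction m using Nat.twoStepInduction with
    | zero => simpa using hj0
    | one => simpa using hj1
    | more m ih1 ih2 => rw [hj, ih1, ih2]; ring
  have addsub : ∀ a b : ℕ, jl (a + b + b) = jl b * jl (a + b) - (-2 : ℤ) ^ b * jl a := by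
    intro a b
    have h2 : ((-2 : ℤ)) ^ b = (-1) ^ b * 2 ^ b := by
      rw [← neg_one_mul, mul_pow]
    rw [closed, closed, closed, closed, h2, pow_add, pow_add, pow_add, pow_add]
    ring
  induction n, hn using Nat.le_induction with
  | base =>
      simp only [show (2:ℕ) - 1 = 1 from rfl, pow_one, Finset.Icc_self,
        Finset.sum_singleton, Nat.sub_self, pow_zero, one_mul, mul_one, two_mul]
      exact addsub i i
  | succ n hn ih =>
      obtain ⟨m, rfl⟩ : ∃ m, n = m + 2 := ⟨n - 2, by omega⟩
      have key := addsub ((m + 2) * i) i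
      have hsum : ∑ k ∈ Finset.Icc 1 (m + 2 + 1 - 1), jl i ^ (m + 2 + 1 - 1 - k) * jl (i * k)
          = jl i * (∑ k ∈ Finset.Icc 1 (m + 1), jl i ^ (m + 1 - k) * jl (i * k))
            + jl (i * (m + 2)) := by
      -- peel off the top term and factor jl i
        have h1 : (1 : ℕ) ≤ m + 2 := by omega
        rw [show m + 2 + 1 - 1 = m + 1 + 1 from rfl, Finset.sum_Icc_succ_top h1]
        rw [Finset.mul_sum]
        congr 1
        · refine Finset.sum_congr rfl ?_
          intro k hk
          have hk' : k ≤ m + 1 := (Finset.mem_Icc.mp hk).2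
          have : m + 1 + 1 - k = (m + 1 - k) + 1 := by omega
          rw [this, pow_succ]
          ring
        · simp
      rw [show (m + 2 + 1) * i + i = (m + 2) * i + i + i by ring, key, ih, hsum]
      have : m + 2 + 1 - 1 = (m + 1) + 1 := rfl
      rw [this, show m + 2 - 1 = m + 1 from rfl, show (m + 2) * i = i * (m + 2) by ring]
      ring
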